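/- Let n ∈ ℕ and let H, E, P, M, S be n×n complex matrices such that H commutes with each of P, M, S; P commutes with M; P - M is invertible; P * M is invertible; and the closure relation holds: H*(H*E - E*H) - (H*E - E*H)*H = -E*(P*M) + (H*E - E*H)*(P + M) + S. Define a⁺ = ((H*E - E*H) - (E - S*(P*M)⁻¹)*M) * (P - M)⁻¹ and a⁻ = -((H*E - E*H) - (E - S*(P*M)⁻¹)*P) * (P - M)⁻¹. Then for every t ∈ ℝ: Matrix.exp(t • (Complex.I • H)) * E * Matrix.exp(-(t • (Complex.I • H))) = a⁺ * Matrix.exp(t • (Complex.I • P)) + a⁻ * Matrix.exp(t • (Complex.I • M)) + S * (P*M)⁻¹. -/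

import Mathlib

open Matrix

private lemma commute_nonsing_inv {N : ℕ} (A B : Matrix (Fin N) (Fin N) ℂ)
    (hB : IsUnit B) (h : A * B = B * A) : A * B⁻¹ = B⁻¹ * A := by
  have hd : IsUnit B.det := (Matrix.isUnit_iff_isUnit_det B).mp hB
  calc A * B⁻¹ = B⁻¹ * B * (A * B⁻¹) := by rw [Matrix.nonsing_inv_mul _ hd, one_mul]
    _ = B⁻¹ * (B * A) * B⁻¹ := by noncomm_ring
    _ = B⁻¹ * A * (B * B⁻¹) := by rw [← h]; noncomm_ring
    _ = B⁻¹ * A := by rw [Matrix.mul_nonsing_inv _ hd, mul_one]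

private lemma exp_semiconj {N : ℕ} (X Y a : Matrix (Fin N) (Fin N) ℂ)
    (h : X * a = a * Y) :
    NormedSpace.exp X * a = a * NormedSpace.exp Y := by
  letI : SeminormedRing (Matrix (Fin N) (Fin N) ℂ) := Matrix.linftyOpSemiNormedRing
  letI : NormedRing (Matrix (Fin N) (Fin N) ℂ) := Matrix.linftyOpNormedRing
  letI : NormedAlgebra ℂ (Matrix (Fin N) (Fin N) ℂ) := Matrix.linftyOpNormedAlgebra
  have hpow : ∀ k : ℕ, X ^ k * a = a * Y ^ k := by
    intro k
    induction k with
    | zero => simp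
    | succ k ih =>
      calc X ^ (k + 1) * a = X ^ k * (X * a) := by rw [pow_succ, mul_assoc]
        _ = X ^ k * a * Y := by rw [h, ← mul_assoc]
        _ = a * Y ^ (k + 1) := by rw [ih, mul_assoc, ← pow_succ]
  have h1 := (NormedSpace.exp_series_hasSum_exp' (𝕂 := ℂ) X).mul_right a
  have h2 := (NormedSpace.exp_series_hasSum_exp' (𝕂 := ℂ) Y).mul_left a
  have heq : (fun k : ℕ => ((Nat.factorial k : ℂ))⁻¹ • X ^ k * a)
      = fun k : ℕ => a * (((Nat.factorial k : ℂ))⁻¹ • Y ^ k) := by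
    funext k
    rw [smul_mul_assoc, hpow, mul_smul_comm]
  rw [heq] at h1
  exact h1.unique h2

theorem heisenberg_solution_from_closure (n : ℕ)
    (H E P M S : Matrix (Fin n) (Fin n) ℂ)
    (hHP : H * P = P * H) (hHM : H * M = M * H) (hHS : H * S = S * H)
    (hPM : P * M = M * P)
    (hPMsub : IsUnit (P - M)) (hPMmul : IsUnit (P * M))
    (hcr : H * (H * E - E * H) - (H * E - E * H) * H
      = -(E * (P * M)) + (H * E - E * H) * (P + M) + S) :
    ∀ t : ℝ,
      NormedSpace.exp (t • (Complex.I • H)) * E *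
          NormedSpace.exp (-(t • (Complex.I • H)))
        = (((H * E - E * H) - (E - S * (P * M)⁻¹) * M) * (P - M)⁻¹) *
              NormedSpace.exp (t • (Complex.I • P))
          + (-((H * E - E * H) - (E - S * (P * M)⁻¹) * P) * (P - M)⁻¹) *
              NormedSpace.exp (t • (Complex.I • M))
          + S * (P * M)⁻¹ := by
  intro t
  have hdPM : IsUnit (P * M).det := (Matrix.isUnit_iff_isUnit_det _).mp hPMmul
  have hdSub : IsUnit (P - M).det := (Matrix.isUnit_iff_isUnit_det _).mp hPMsub
  simp only [← smul_assoc]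
  set c : ℂ := t • Complex.I with hc
  set A : Matrix (Fin n) (Fin n) ℂ := H * E - E * H with hA
  set C : Matrix (Fin n) (Fin n) ℂ := S * (P * M)⁻¹ with hCdef
  set X : Matrix (Fin n) (Fin n) ℂ := E - C with hX
  set ap : Matrix (Fin n) (Fin n) ℂ := (A - X * M) * (P - M)⁻¹ with hap
  set am : Matrix (Fin n) (Fin n) ℂ := -(A - X * P) * (P - M)⁻¹ with ham
  -- H commutes with C
  have hHPM : H * (P * M) = (P * M) * H := by
    rw [← mul_assoc, hHP, mul_assoc, hHM, ← mul_assoc]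
  have hHPMinv : H * (P * M)⁻¹ = (P * M)⁻¹ * H :=
    commute_nonsing_inv H (P * M) hPMmul hHPM
  have hHC : H * C = C * H := by
    rw [hCdef, ← mul_assoc, hHS, mul_assoc, hHPMinv, ← mul_assoc]
  -- commutation with (P - M)⁻¹
  have hHsub : H * (P - M) = (P - M) * H := by rw [mul_sub, sub_mul, hHP, hHM]
  have hHsubinv : H * (P - M)⁻¹ = (P - M)⁻¹ * H :=
    commute_nonsing_inv H (P - M) hPMsub hHsub
  have hPsub : P * (P - M) = (P - M) * P := by rw [mul_sub, sub_mul, hPM]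
  have hPsubinv : P * (P - M)⁻¹ = (P - M)⁻¹ * P :=
    commute_nonsing_inv P (P - M) hPMsub hPsub
  have hMsub : M * (P - M) = (P - M) * M := by rw [mul_sub, sub_mul, ← hPM]
  have hMsubinv : M * (P - M)⁻¹ = (P - M)⁻¹ * M :=
    commute_nonsing_inv M (P - M) hPMsub hMsub
  -- decomposition of E
  have hsum : ap + am = X := by
    have h0 : ap + am = X * ((P - M) * (P - M)⁻¹) := by
      rw [hap, ham]; noncomm_ring
    rw [h0, Matrix.mul_nonsing_inv _ hdSub, mul_one]
  have hE : E = ap + am + C := by rw [hsum, hX]; abel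
  -- basic commutator facts
  have e1 : H * A = A * H + (-(E * (P * M)) + A * (P + M) + S) := by
    rw [← hcr]; noncomm_ring
  have e2 : H * X = A + X * H := by
    rw [hX, hA, mul_sub, hHC, sub_mul]; abel
  -- the two closure identities
  have e4p : E * (P * M) = X * M * P + S := by
    have h0 : X * M * P = E * (M * P) - S * ((P * M)⁻¹ * (M * P)) := by
      rw [hX, hCdef]; noncomm_ring
    rw [h0, ← hPM, Matrix.nonsing_inv_mul _ hdPM, mul_one]; abel
  have e4m : E * (P * M) = X * P * M + S := by
    have h0 : X * P * M = E * (P * M) - S * ((P * M)⁻¹ * (P * M)) := by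
      rw [hX, hCdef]; noncomm_ring
    rw [h0, Matrix.nonsing_inv_mul _ hdPM, mul_one]; abel
  have hkp : H * (A - X * M) = (A - X * M) * (H + P) := by
    have expand : H * (A - X * M) = H * A - H * X * M := by noncomm_ring
    rw [expand, e1, e2]
    have e3 : (A + X * H) * M = A * M + X * (M * H) := by
      rw [add_mul, mul_assoc, hHM]
    rw [e3, e4p]
    noncomm_ring
  have hkm : H * (A - X * P) = (A - X * P) * (H + M) := by
    have expand : H * (A - X * P) = H * A - H * X * P := by noncomm_ring
    rw [expand, e1, e2]
    have e3 : (A + X * H) * P = A * P + X * (P * H) := by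
      rw [add_mul, mul_assoc, hHP]
    rw [e3, e4m]
    noncomm_ring
  -- semiconjugation for ap and am
  have hkey_p : H * ap = ap * (H + P) := by
    rw [hap, ← mul_assoc, hkp, mul_assoc, mul_assoc]
    congr 1
    rw [add_mul, mul_add, hHsubinv, hPsubinv]
  have hkey_m : H * am = am * (H + M) := by
    have hHMsubinv : (H + M) * (P - M)⁻¹ = (P - M)⁻¹ * (H + M) := by
      rw [add_mul, mul_add, hHsubinv, hMsubinv]
    have h1 : H * am = -(H * (A - X * P) * (P - M)⁻¹) := by rw [ham]; noncomm_ring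
    rw [h1, hkm, mul_assoc, hHMsubinv, ham]
    noncomm_ring
  -- scaled semiconjugation
  have hsp : (c • H) * ap = ap * (c • (H + P)) := by
    rw [smul_mul_assoc, hkey_p, mul_smul_comm]
  have hsm : (c • H) * am = am * (c • (H + M)) := by
    rw [smul_mul_assoc, hkey_m, mul_smul_comm]
  have hsc : (c • H) * C = C * (c • H) := by
    rw [smul_mul_assoc, hHC, mul_smul_comm]
  -- exponential identities
  have commHP : Commute H P := hHP
  have commHM : Commute H M := hHM
  have cP : Commute (c • (H + P)) (-(c • H)) :=
    ((((Commute.refl H).add_left commHP.symm).smul_left c).smul_right c).neg_right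
  have cM : Commute (c • (H + M)) (-(c • H)) :=
    ((((Commute.refl H).add_left commHM.symm).smul_left c).smul_right c).neg_right
  have T1 : NormedSpace.exp (c • H) * ap * NormedSpace.exp (-(c • H))
      = ap * NormedSpace.exp (c • P) := by
    rw [exp_semiconj _ _ _ hsp, mul_assoc,
      ← Matrix.exp_add_of_commute _ _ cP,
      show c • (H + P) + -(c • H) = c • P from by rw [smul_add]; abel]
  have T2 : NormedSpace.exp (c • H) * am * NormedSpace.exp (-(c • H))
      = am * NormedSpace.exp (c • M) := by
    rw [exp_semiconj _ _ _ hsm, mul_assoc,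
      ← Matrix.exp_add_of_commute _ _ cM,
      show c • (H + M) + -(c • H) = c • M from by rw [smul_add]; abel]
  have T3 : NormedSpace.exp (c • H) * C * NormedSpace.exp (-(c • H)) = C := by
    rw [exp_semiconj _ _ _ hsc, mul_assoc,
      ← Matrix.exp_add_of_commute _ _ (Commute.refl (c • H)).neg_right,
      add_neg_cancel, NormedSpace.exp_zero, mul_one]
  calc NormedSpace.exp (c • H) * E * NormedSpace.exp (-(c • H))
      = NormedSpace.exp (c • H) * ap * NormedSpace.exp (-(c • H))
        + NormedSpace.exp (c • H) * am * NormedSpace.exp (-(c • H))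
        + NormedSpace.exp (c • H) * C * NormedSpace.exp (-(c • H)) := by
        rw [hE]; noncomm_ring
    _ = ap * NormedSpace.exp (c • P) + am * NormedSpace.exp (c • M) + C := by
        rw [T1, T2, T3]
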